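/- arXiv:1609.03326 — 2 statements merged into one kernel-verified Lean document; each statement's English description precedes it below -/
import Mathlib

section
/- Let (X, μ) be a measure space, γ > 0, and let u₁, u₂, λ₁, λ₂, v, μ̂ ∈ L²(μ) be real-valued. Define b₁[(u,λ);(v,μ̂)] := γ^{-1}⟨[u - γλ]_+, v⟩ + ⟨[u - γλ]_+, μ̂⟩ + γ⟨λ, μ̂⟩. Then |b₁[(u₁,λ₁);(v,μ̂)] - b₁[(u₂,λ₂);(v,μ̂)]| ≤ 2·(γ^{-1/2}‖u₁ - u₂‖ + γ^{1/2}‖λ₁ - λ₂‖)·(γ^{-1/2}‖v‖ + γ^{1/2}‖μ̂‖). -/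
open MeasureTheory
open scoped RealInnerProductSpace

lemma posPart_norm_sub_le {X : Type*} [MeasurableSpace X] {μ : Measure X}
    (f g : Lp ℝ 2 μ) : ‖Lp.posPart f - Lp.posPart g‖ ≤ ‖f - g‖ := by
  simpa [Lp.posPart] using LipschitzWith.norm_compLp_sub_le Lp.lipschitzWith_pos_part
    (max_eq_right le_rfl) f g

/-- Continuity estimate (Lemma 3.2) for the contact form of Formulation 1,
`b₁[(u,λ);(v,μ̂)] := γ⁻¹⟨[u - γλ]_+, v⟩ + ⟨[u - γλ]_+, μ̂⟩ + γ⟨λ, μ̂⟩`. -/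
theorem formulation1_continuity {X : Type*} [MeasurableSpace X] (μ : Measure X)
    (gam : ℝ) (hgam : 0 < gam)
    (u₁ u₂ lam₁ lam₂ v muh : Lp ℝ 2 μ)
    (b₁ : Lp ℝ 2 μ → Lp ℝ 2 μ → Lp ℝ 2 μ → Lp ℝ 2 μ → ℝ)
    (hb₁ : ∀ u lam w m, b₁ u lam w m =
      gam⁻¹ * ⟪Lp.posPart (u - gam • lam), w⟫ + ⟪Lp.posPart (u - gam • lam), m⟫
        + gam * ⟪lam, m⟫) :
    |b₁ u₁ lam₁ v muh - b₁ u₂ lam₂ v muh| ≤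
      2 * ((Real.sqrt gam)⁻¹ * ‖u₁ - u₂‖ + Real.sqrt gam * ‖lam₁ - lam₂‖) *
        ((Real.sqrt gam)⁻¹ * ‖v‖ + Real.sqrt gam * ‖muh‖) := by
  set P₁ := Lp.posPart (u₁ - gam • lam₁) with hP₁
  set P₂ := Lp.posPart (u₂ - gam • lam₂) with hP₂
  have hdiff : b₁ u₁ lam₁ v muh - b₁ u₂ lam₂ v muh =
      gam⁻¹ * ⟪P₁ - P₂, v⟫ + ⟪P₁ - P₂, muh⟫ + gam * ⟪lam₁ - lam₂, muh⟫ := by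
    rw [hb₁, hb₁, inner_sub_left, inner_sub_left, inner_sub_left]
    ring
  set a := ‖u₁ - u₂‖ with ha
  set b := ‖lam₁ - lam₂‖ with hb
  set c := ‖v‖ with hc
  set d := ‖muh‖ with hd
  have hPle : ‖P₁ - P₂‖ ≤ a + gam * b := by
    calc ‖P₁ - P₂‖ ≤ ‖(u₁ - gam • lam₁) - (u₂ - gam • lam₂)‖ := posPart_norm_sub_le _ _
      _ = ‖(u₁ - u₂) - gam • (lam₁ - lam₂)‖ := by congr 1; module
      _ ≤ ‖u₁ - u₂‖ + ‖gam • (lam₁ - lam₂)‖ := norm_sub_le _ _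
      _ = a + gam * b := by rw [norm_smul, Real.norm_eq_abs, abs_of_pos hgam]
  have hbound : |b₁ u₁ lam₁ v muh - b₁ u₂ lam₂ v muh| ≤
      gam⁻¹ * (‖P₁ - P₂‖ * c) + ‖P₁ - P₂‖ * d + gam * (b * d) := by
    rw [hdiff]
    have h1 := abs_real_inner_le_norm (P₁ - P₂) v
    have h2 := abs_real_inner_le_norm (P₁ - P₂) muh
    have h3 := abs_real_inner_le_norm (lam₁ - lam₂) muh
    calc |gam⁻¹ * ⟪P₁ - P₂, v⟫ + ⟪P₁ - P₂, muh⟫ + gam * ⟪lam₁ - lam₂, muh⟫|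
        ≤ |gam⁻¹ * ⟪P₁ - P₂, v⟫| + |⟪P₁ - P₂, muh⟫| + |gam * ⟪lam₁ - lam₂, muh⟫| := by
          exact (abs_add_le _ _).trans (by gcongr; exact abs_add_le _ _)
      _ ≤ gam⁻¹ * (‖P₁ - P₂‖ * c) + ‖P₁ - P₂‖ * d + gam * (b * d) := by
          rw [abs_mul, abs_mul, abs_of_pos hgam, abs_of_pos (inv_pos.mpr hgam)]
          gcongr
  have hs : Real.sqrt gam > 0 := Real.sqrt_pos.mpr hgam
  have hs2 : Real.sqrt gam * Real.sqrt gam = gam := Real.mul_self_sqrt hgam.le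
  have hsi : (Real.sqrt gam)⁻¹ * (Real.sqrt gam)⁻¹ = gam⁻¹ := by
    rw [← mul_inv, hs2]
  have hsi2 : (Real.sqrt gam)⁻¹ * Real.sqrt gam = 1 := inv_mul_cancel₀ hs.ne'
  have hRHS : 2 * ((Real.sqrt gam)⁻¹ * a + Real.sqrt gam * b) *
      ((Real.sqrt gam)⁻¹ * c + Real.sqrt gam * d) =
      2 * (gam⁻¹ * (a * c) + a * d + b * c + gam * (b * d)) := by
    calc 2 * ((Real.sqrt gam)⁻¹ * a + Real.sqrt gam * b) *
        ((Real.sqrt gam)⁻¹ * c + Real.sqrt gam * d)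
        = 2 * (((Real.sqrt gam)⁻¹ * (Real.sqrt gam)⁻¹) * (a * c)
            + ((Real.sqrt gam)⁻¹ * Real.sqrt gam) * (a * d)
            + ((Real.sqrt gam)⁻¹ * Real.sqrt gam) * (b * c)
            + (Real.sqrt gam * Real.sqrt gam) * (b * d)) := by ring
      _ = 2 * (gam⁻¹ * (a * c) + a * d + b * c + gam * (b * d)) := by
          rw [hsi, hsi2, hs2]; ring
  rw [hRHS]
  have ha0 : 0 ≤ a := norm_nonneg _
  have hb0 : 0 ≤ b := norm_nonneg _
  have hc0 : 0 ≤ c := norm_nonneg _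
  have hd0 : 0 ≤ d := norm_nonneg _
  have hgi : 0 < gam⁻¹ := inv_pos.mpr hgam
  have hq1 : gam⁻¹ * (‖P₁ - P₂‖ * c) ≤ gam⁻¹ * (a * c) + b * c := by
    have : gam⁻¹ * (‖P₁ - P₂‖ * c) ≤ gam⁻¹ * ((a + gam * b) * c) :=
      mul_le_mul_of_nonneg_left (mul_le_mul_of_nonneg_right hPle hc0) hgi.le
    have he : gam⁻¹ * ((a + gam * b) * c) = gam⁻¹ * (a * c) + b * c := by
      field_simp
    linarith [this, he.le]
  have hq2 : ‖P₁ - P₂‖ * d ≤ a * d + gam * (b * d) := by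
    have := mul_le_mul_of_nonneg_right hPle hd0
    nlinarith
  have hp1 : 0 ≤ gam⁻¹ * (a * c) := by positivity
  have hp2 : 0 ≤ a * d := by positivity
  have hp3 : 0 ≤ b * c := by positivity
  linarith
end

section
/- Let (X, μ) be a measure space, γ > 0, and let u₁, u₂, λ₁, λ₂, v, μ̂ ∈ L²(μ) be real-valued. Define b₂[(u,λ);(v,μ̂)] := -⟨λ, v⟩ + ⟨μ̂, u⟩ + ⟨μ̂, [γλ - u]_+⟩. Then |b₂[(u₁,λ₁);(v,μ̂)] - b₂[(u₂,λ₂);(v,μ̂)]| ≤ 2·(γ^{-1/2}‖u₁ - u₂‖ + γ^{1/2}‖λ₁ - λ₂‖)·(γ^{-1/2}‖v‖ + γ^{1/2}‖μ̂‖). -/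
open MeasureTheory
open scoped RealInnerProductSpace

/-- Continuity estimate (Lemma 3.2) for the contact form of Formulation 2,
`b₂[(u,λ);(v,μ̂)] := -⟨λ, v⟩ + ⟨μ̂, u⟩ + ⟨μ̂, [γλ - u]_+⟩`. -/
theorem formulation2_continuity {X : Type*} [MeasurableSpace X] (μ : Measure X)
    (gam : ℝ) (hgam : 0 < gam)
    (u₁ u₂ lam₁ lam₂ v muh : Lp ℝ 2 μ)
    (b₂ : Lp ℝ 2 μ → Lp ℝ 2 μ → Lp ℝ 2 μ → Lp ℝ 2 μ → ℝ)
    (hb₂ : ∀ u lam w m, b₂ u lam w m =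
      -⟪lam, w⟫ + ⟪m, u⟫ + ⟪m, Lp.posPart (gam • lam - u)⟫) :
    |b₂ u₁ lam₁ v muh - b₂ u₂ lam₂ v muh| ≤
      2 * ((Real.sqrt gam)⁻¹ * ‖u₁ - u₂‖ + Real.sqrt gam * ‖lam₁ - lam₂‖) *
        ((Real.sqrt gam)⁻¹ * ‖v‖ + Real.sqrt gam * ‖muh‖) := by
  rw [hb₂, hb₂]
  set P₁ := Lp.posPart (gam • lam₁ - u₁)
  set P₂ := Lp.posPart (gam • lam₂ - u₂)
  have hP : ‖P₁ - P₂‖ ≤ gam * ‖lam₁ - lam₂‖ + ‖u₁ - u₂‖ := by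
    have h1 : ‖P₁ - P₂‖ ≤ ((1 : NNReal) : ℝ) * ‖(gam • lam₁ - u₁) - (gam • lam₂ - u₂)‖ :=
      MeasureTheory.Lp.lipschitzWith_pos_part.norm_compLp_sub_le (max_eq_right le_rfl) _ _
    have h2 : (gam • lam₁ - u₁) - (gam • lam₂ - u₂) = gam • (lam₁ - lam₂) - (u₁ - u₂) := by
      module
    calc ‖P₁ - P₂‖ ≤ ‖gam • (lam₁ - lam₂) - (u₁ - u₂)‖ := by
          simpa [h2] using h1
      _ ≤ ‖gam • (lam₁ - lam₂)‖ + ‖u₁ - u₂‖ := norm_sub_le _ _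
      _ = gam * ‖lam₁ - lam₂‖ + ‖u₁ - u₂‖ := by
          rw [norm_smul, Real.norm_eq_abs, abs_of_pos hgam]
  have key : |(-⟪lam₁, v⟫ + ⟪muh, u₁⟫ + ⟪muh, P₁⟫) - (-⟪lam₂, v⟫ + ⟪muh, u₂⟫ + ⟪muh, P₂⟫)|
      ≤ ‖lam₁ - lam₂‖ * ‖v‖ + ‖muh‖ * ‖u₁ - u₂‖ + ‖muh‖ * ‖P₁ - P₂‖ := by
    have e : (-⟪lam₁, v⟫ + ⟪muh, u₁⟫ + ⟪muh, P₁⟫) - (-⟪lam₂, v⟫ + ⟪muh, u₂⟫ + ⟪muh, P₂⟫)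
        = -⟪lam₁ - lam₂, v⟫ + ⟪muh, u₁ - u₂⟫ + ⟪muh, P₁ - P₂⟫ := by
      rw [inner_sub_left, inner_sub_right, inner_sub_right]; ring
    rw [e]
    calc |(-⟪lam₁ - lam₂, v⟫ + ⟪muh, u₁ - u₂⟫ + ⟪muh, P₁ - P₂⟫)|
        ≤ |⟪lam₁ - lam₂, v⟫| + |⟪muh, u₁ - u₂⟫| + |⟪muh, P₁ - P₂⟫| := by
          calc _ ≤ |(-⟪lam₁ - lam₂, v⟫ + ⟪muh, u₁ - u₂⟫)| + |⟪muh, P₁ - P₂⟫| := abs_add_le _ _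
            _ ≤ |⟪lam₁ - lam₂, v⟫| + |⟪muh, u₁ - u₂⟫| + |⟪muh, P₁ - P₂⟫| := by
                have := abs_add_le (-⟪lam₁ - lam₂, v⟫) (⟪muh, u₁ - u₂⟫)
                rw [abs_neg] at this; linarith
      _ ≤ ‖lam₁ - lam₂‖ * ‖v‖ + ‖muh‖ * ‖u₁ - u₂‖ + ‖muh‖ * ‖P₁ - P₂‖ := by
          gcongr <;> exact abs_real_inner_le_norm _ _
  have hs : Real.sqrt gam * Real.sqrt gam = gam := Real.mul_self_sqrt hgam.le
  have hs0 : 0 < Real.sqrt gam := Real.sqrt_pos.mpr hgam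
  have hnl : 0 ≤ ‖lam₁ - lam₂‖ := norm_nonneg _
  have hnu : 0 ≤ ‖u₁ - u₂‖ := norm_nonneg _
  have hnv : 0 ≤ ‖v‖ := norm_nonneg _
  have hnm : 0 ≤ ‖muh‖ := norm_nonneg _
  refine key.trans ?_
  have h3 : ‖muh‖ * ‖P₁ - P₂‖ ≤ ‖muh‖ * (gam * ‖lam₁ - lam₂‖ + ‖u₁ - u₂‖) := by
    gcongr
  rw [inv_eq_one_div]
  have hexp : 2 * ((1 / Real.sqrt gam) * ‖u₁ - u₂‖ + Real.sqrt gam * ‖lam₁ - lam₂‖) *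
        ((1 / Real.sqrt gam) * ‖v‖ + Real.sqrt gam * ‖muh‖)
      = 2 * (‖u₁ - u₂‖ * ‖v‖ / gam + ‖u₁ - u₂‖ * ‖muh‖ + ‖lam₁ - lam₂‖ * ‖v‖
          + gam * ‖lam₁ - lam₂‖ * ‖muh‖) := by
    field_simp
    linear_combination (‖lam₁ - lam₂‖*‖muh‖*gam*(Real.sqrt gam * Real.sqrt gam) -
      ‖u₁ - u₂‖*‖v‖) * hs
  nlinarith [mul_nonneg hnu hnv, mul_nonneg hnu hnm, mul_nonneg hnl hnv,
    mul_nonneg (mul_nonneg hgam.le hnl) hnm, div_nonneg (mul_nonneg hnu hnv) hgam.le, h3, hexp]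
end
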